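/- If β_1,...,β_m ∈ Z[ω]^m are m linearly independent vectors such that sum(β_k) ∈ (1+ω)Z[ω] for all k on the one hand, and |det([β_1,...,β_m])|² = 3 on the other hand, then the Z[ω]-span of β_1,...,β_m equals E_m = {(x_1,...,x_m) ∈ Z[ω]^m : Σ x_k ∈ (1+ω)Z[ω]}. -/

import Mathlib

noncomputable def ω : ℂ := (1 + Real.sqrt 3 * Complex.I) / 2

def Zω : Set ℂ := {x | ∃ a b : ℤ, x = (a : ℂ) + (b : ℂ) * ω}

def idealω : Set ℂ := {x | ∃ z ∈ Zω, x = (1 + ω) * z}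

def Em (m : ℕ) : Set (Fin m → ℂ) :=
  {x | (∀ k, x k ∈ Zω) ∧ (∑ k, x k) ∈ idealω}

lemma sqrt3_sq : (Real.sqrt 3 : ℂ) ^ 2 = 3 := by
  rw [← Complex.ofReal_pow, Real.sq_sqrt (by norm_num : (0:ℝ) ≤ 3)]; norm_num
lemma omega_mul : ω * ω = ω - 1 := by
  unfold ω
  have hprod : (Real.sqrt 3 : ℂ)^2 * Complex.I^2 = -3 := by
    rw [sqrt3_sq, Complex.I_sq]; ring
  field_simp
  linear_combination hprod
lemma conj_omega : (starRingEnd ℂ) ω = 1 - ω := by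
  unfold ω
  simp [map_div₀, Complex.conj_I, Complex.conj_ofReal, map_ofNat]
  ring
lemma normSq_one_add_omega : Complex.normSq (1 + ω) = 3 := by
  have : (1 + ω) = ((3/2 : ℝ) : ℂ) + ((Real.sqrt 3 / 2 : ℝ) : ℂ) * Complex.I := by
    unfold ω; push_cast; ring
  rw [this, Complex.normSq_add_mul_I]
  rw [div_pow, div_pow, Real.sq_sqrt (by norm_num : (0:ℝ) ≤ 3)]
  norm_num

noncomputable def Zsub : Subring ℂ where
  carrier := Zω
  zero_mem' := ⟨0, 0, by push_cast; ring⟩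
  one_mem' := ⟨1, 0, by push_cast; ring⟩
  add_mem' := by
    rintro x y ⟨a, b, rfl⟩ ⟨c, d, rfl⟩
    exact ⟨a + c, b + d, by push_cast; ring⟩
  neg_mem' := by
    rintro x ⟨a, b, rfl⟩
    exact ⟨-a, -b, by push_cast; ring⟩
  mul_mem' := by
    rintro x y ⟨a, b, rfl⟩ ⟨c, d, rfl⟩
    refine ⟨a * c - b * d, a * d + b * c + b * d, ?_⟩
    push_cast
    linear_combination ((b : ℂ) * (d : ℂ)) * omega_mul

lemma mem_Zsub {x : ℂ} : x ∈ Zω ↔ x ∈ Zsub := Iff.rfl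

lemma omega_mem : ω ∈ Zω := ⟨0, 1, by push_cast; ring⟩

lemma one_add_omega_mem : (1 + ω) ∈ Zω := ⟨1, 1, by push_cast; ring⟩

lemma conj_mem {x : ℂ} (hx : x ∈ Zω) : (starRingEnd ℂ) x ∈ Zω := by
  obtain ⟨a, b, rfl⟩ := hx
  refine ⟨a + b, -b, ?_⟩
  rw [map_add, map_mul, conj_omega, map_intCast, map_intCast]
  push_cast
  ring

-- ideal lemmas
lemma ideal_sub_Zω {x : ℂ} (hx : x ∈ idealω) : x ∈ Zω := by
  obtain ⟨z, hz, rfl⟩ := hx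
  exact mem_Zsub.mpr (Subring.mul_mem _ (mem_Zsub.mp one_add_omega_mem) (mem_Zsub.mp hz))

lemma ideal_zero : (0 : ℂ) ∈ idealω := ⟨0, Zsub.zero_mem, by ring⟩

lemma ideal_add {x y : ℂ} (hx : x ∈ idealω) (hy : y ∈ idealω) : x + y ∈ idealω := by
  obtain ⟨z, hz, rfl⟩ := hx
  obtain ⟨w, hw, rfl⟩ := hy
  exact ⟨z + w, Zsub.add_mem hz hw, by ring⟩

lemma ideal_mul {c x : ℂ} (hc : c ∈ Zω) (hx : x ∈ idealω) : c * x ∈ idealω := by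
  obtain ⟨z, hz, rfl⟩ := hx
  exact ⟨c * z, Zsub.mul_mem hc hz, by ring⟩

lemma ideal_sum {ι : Type*} (s : Finset ι) (f : ι → ℂ) (h : ∀ i ∈ s, f i ∈ idealω) :
    (∑ i ∈ s, f i) ∈ idealω := by
  classical
  induction s using Finset.induction_on with
  | empty => simpa using ideal_zero
  | insert _ _ hns ih =>
      rw [Finset.sum_insert hns]
      exact ideal_add (h _ (Finset.mem_insert_self _ _))
        (ih fun i hi => h i (Finset.mem_insert_of_mem hi))

lemma det_mem_Zω {n : ℕ} (M : Matrix (Fin n) (Fin n) ℂ) (h : ∀ i j, M i j ∈ Zω) :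
    M.det ∈ Zω := by
  classical
  let M' : Matrix (Fin n) (Fin n) Zsub := fun i j => ⟨M i j, h i j⟩
  have hM : (Zsub.subtype).mapMatrix M' = M := by
    ext i j; rfl
  have := (RingHom.map_det Zsub.subtype M').symm
  rw [hM] at this
  rw [this]
  exact (M'.det).2

lemma det_mem_ideal {n : ℕ} (M : Matrix (Fin (n + 1)) (Fin (n + 1)) ℂ)
    (h : ∀ i j, M i j ∈ Zω) (hcol : ∀ j, (∑ i, M i j) ∈ idealω) :
    M.det ∈ idealω := by
  classical
  have key : M.det = (M.updateRow 0 (∑ k, M k)).det := by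
    have := M.det_updateRow_sum 0 (fun _ => (1 : ℂ))
    simp only [one_smul] at this
    exact this.symm
  rw [key, Matrix.det_succ_row_zero]
  refine ideal_sum _ _ fun j _ => ?_
  have h0j : (M.updateRow 0 (∑ k, M k)) 0 j = ∑ i, M i j := by
    rw [Matrix.updateRow_self]
    exact Finset.sum_apply _ _ _
  have hsub : ((M.updateRow 0 (∑ k, M k)).submatrix Fin.succ j.succAbove).det ∈ Zω := by
    apply det_mem_Zω
    intro i j'
    simp only [Matrix.submatrix_apply]
    rw [Matrix.updateRow_ne (Fin.succ_ne_zero i)]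
    exact h _ _
  have hrw : (-1 : ℂ) ^ (j : ℕ) * (M.updateRow 0 (∑ k, M k)) 0 j *
      ((M.updateRow 0 (∑ k, M k)).submatrix Fin.succ j.succAbove).det =
      ((-1 : ℂ) ^ (j : ℕ) * ((M.updateRow 0 (∑ k, M k)).submatrix Fin.succ j.succAbove).det) *
        (∑ i, M i j) := by
    rw [h0j]; ring
  rw [hrw]
  refine ideal_mul (mem_Zsub.mpr (Subring.mul_mem _ ?_ (mem_Zsub.mp hsub))) (hcol j)
  exact mem_Zsub.mp ⟨(-1) ^ (j : ℕ), 0, by push_cast; ring⟩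

/-- If β_1,...,β_m ∈ Z[ω]^m are linearly independent, each with coordinate sum in
(1+ω)Z[ω], and |det([β_1,...,β_m])|² = 3, then their Z[ω]-span equals E_m. -/
theorem stmt5 (m : ℕ) (β : Fin m → (Fin m → ℂ))
    (hZ : ∀ k i, β k i ∈ Zω)
    (hind : LinearIndependent ℂ β)
    (hsum : ∀ k, (∑ i, β k i) ∈ idealω)
    (hdet : Complex.normSq (Matrix.det (Matrix.of fun i k => β k i)) = 3) :
    {x | ∃ c : Fin m → ℂ, (∀ k, c k ∈ Zω) ∧ x = ∑ k, c k • β k} = Em m := by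
  rcases m with _ | n
  · exact absurd hdet (by norm_num [Matrix.det_fin_zero])
  ext x
  simp only [Set.mem_setOf_eq]
  constructor
  · rintro ⟨c, hc, rfl⟩
    constructor
    · intro i
      rw [Finset.sum_apply]
      refine mem_Zsub.mpr (Subring.sum_mem _ fun k _ => ?_)
      simp only [Pi.smul_apply, smul_eq_mul]
      exact Subring.mul_mem _ (hc k) (hZ k i)
    · have : (∑ i, (∑ k, c k • β k) i) = ∑ k, c k * ∑ i, β k i := by
        simp only [Finset.sum_apply, Pi.smul_apply, smul_eq_mul]
        rw [Finset.sum_comm]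
        simp_rw [Finset.mul_sum]
      rw [this]
      exact ideal_sum _ _ fun k _ => ideal_mul (hc k) (hsum k)
  · rintro ⟨hxZ, hxsum⟩
    set B : Matrix (Fin (n + 1)) (Fin (n + 1)) ℂ := Matrix.of fun i k => β k i with hBdef
    have hdetB_ne : B.det ≠ 0 := by
      intro h; rw [h] at hdet; norm_num at hdet
    have hBmem : ∀ i k, B i k ∈ Zω := fun i k => hZ k i
    have hdet_ideal : B.det ∈ idealω := by
      refine det_mem_ideal B hBmem fun k => ?_
      exact hsum k
    obtain ⟨v, hv, hveq⟩ := hdet_ideal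
    have h1ω : (1 + ω : ℂ) ≠ 0 := by
      intro h
      have := normSq_one_add_omega
      rw [h, map_zero] at this
      norm_num at this
    have hvne : v ≠ 0 := by
      rintro rfl
      exact hdetB_ne (by rw [hveq]; ring)
    have hnsv : Complex.normSq v = 1 := by
      have h3 := hdet
      rw [show (Matrix.det (Matrix.of fun i k => β k i)) = B.det from rfl, hveq,
        Complex.normSq_mul, normSq_one_add_omega] at h3
      linarith
    have hvinv : v⁻¹ = (starRingEnd ℂ) v := by
      refine inv_eq_of_mul_eq_one_right ?_
      rw [Complex.mul_conj, hnsv]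
      norm_num
    refine ⟨fun k => (B.det)⁻¹ * Matrix.cramer B x k, fun k => ?_, ?_⟩
    · have hcr : Matrix.cramer B x k = (B.updateCol k x).det := Matrix.cramer_apply B x k
      have hU_ideal : (B.updateCol k x).det ∈ idealω := by
        refine det_mem_ideal _ (fun i j => ?_) (fun j => ?_)
        · rw [Matrix.updateCol_apply]
          split_ifs
          · exact hxZ i
          · exact hBmem i j
        · by_cases hjk : j = k
          · subst hjk
            simpa [Matrix.updateCol_apply] using hxsum
          · have : (∑ i, B.updateCol k x i j) = ∑ i, β j i := by
              refine Finset.sum_congr rfl fun i _ => ?_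
              rw [Matrix.updateCol_apply, if_neg hjk]
              rfl
            rw [this]
            exact hsum j
      obtain ⟨w, hw, hweq⟩ := hU_ideal
      have hck : (B.det)⁻¹ * Matrix.cramer B x k = (starRingEnd ℂ) v * w := by
        rw [hcr, hweq, hveq, ← hvinv]
        field_simp
      show B.det⁻¹ * Matrix.cramer B x k ∈ Zω
      rw [hck]
      exact mem_Zsub.mpr (Subring.mul_mem _ (mem_Zsub.mp (conj_mem hv)) hw)
    · have hc' : (fun k => (B.det)⁻¹ * Matrix.cramer B x k) =
          (B.det)⁻¹ • (Matrix.cramer B x : Fin (n + 1) → ℂ) := by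
        funext k; simp [smul_eq_mul]
      have hmv : B.mulVec (fun k => (B.det)⁻¹ * Matrix.cramer B x k) = x := by
        rw [hc', Matrix.mulVec_smul, Matrix.mulVec_cramer, smul_smul,
          inv_mul_cancel₀ hdetB_ne, one_smul]
      funext i
      have hxi : x i = (B.mulVec (fun k => (B.det)⁻¹ * Matrix.cramer B x k)) i := by rw [hmv]
      rw [hxi]
      simp only [Matrix.mulVec, dotProduct, Finset.sum_apply, Pi.smul_apply, smul_eq_mul]
      exact Finset.sum_congr rfl fun k _ => by rw [mul_comm]; rfl
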